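/- Every merge tree with n leaf nodes (n ≥ 1) admits a presentation with n generators and n−1 relations. -/

import Mathlib

open scoped ENNReal NNReal

/-- A persistent set: a functor `ℝ → Set`, with `ℝ` regarded as a poset category. -/
structure PersistentSet where
  obj : ℝ → Type
  map : ∀ {s t : ℝ}, s ≤ t → obj s → obj t
  map_id : ∀ (t : ℝ) (x : obj t), map (le_refl t) x = x
  map_comp : ∀ {s t u : ℝ} (h1 : s ≤ t) (h2 : t ≤ u) (x : obj s),
    map h2 (map h1 x) = map (le_trans h1 h2) x

/-- An `ε`-interleaving between persistent sets `M` and `N`. -/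
def Interleaved (M N : PersistentSet) (ε : ℝ) : Prop :=
  ∃ (hε : 0 ≤ ε) (φ : ∀ t, M.obj t → N.obj (t + ε)) (ψ : ∀ t, N.obj t → M.obj (t + ε)),
    (∀ (s t : ℝ) (h : s ≤ t) (x : M.obj s),
      φ t (M.map h x) = N.map (by linarith : s + ε ≤ t + ε) (φ s x)) ∧
    (∀ (s t : ℝ) (h : s ≤ t) (x : N.obj s),
      ψ t (N.map h x) = M.map (by linarith : s + ε ≤ t + ε) (ψ s x)) ∧
    (∀ (s : ℝ) (x : M.obj s), ψ (s + ε) (φ s x) = M.map (by linarith : s ≤ s + ε + ε) x) ∧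
    (∀ (s : ℝ) (x : N.obj s), φ (s + ε) (ψ s x) = N.map (by linarith : s ≤ s + ε + ε) x)

/-- A persistent set is constructible if it has a finite set of critical values:
it is empty before the first critical value, and the internal maps are
isomorphisms between consecutive critical values. -/
def Constructible (M : PersistentSet) : Prop :=
  ∃ τ : Finset ℝ,
    (∀ t : ℝ, (∀ s ∈ τ, t < s) → IsEmpty (M.obj t)) ∧
    (∀ (s t : ℝ) (h : s ≤ t), (∀ c ∈ τ, c ≤ s ∨ t < c) → Function.Bijective (M.map h))

/-- A merge tree: a constructible persistent set with finite values which is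
eventually a singleton. -/
structure MergeTree where
  toPS : PersistentSet
  constructible : Constructible toPS
  finite : ∀ t, Finite (toPS.obj t)
  eventually_one : ∃ T : ℝ, ∀ t, T ≤ t → (Nonempty (toPS.obj t) ∧ Subsingleton (toPS.obj t))

/-- Combinatorial data of a presentation: `k` generator strands with birth times `γ`,
`l` relation strands with birth times `ρ`, and for each relation two merge maps
`f j`, `g j` into the generators (a map of strands `R_j → G_i` exists iff
`γ i ≤ ρ j`, which is the content of `hf`, `hg`). -/
structure Pres (k l : ℕ) where
  γ : Fin k → ℝ
  ρ : Fin l → ℝ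
  f : Fin l → Fin k
  g : Fin l → Fin k
  hf : ∀ j, γ (f j) ≤ ρ j
  hg : ∀ j, γ (g j) ≤ ρ j

/-- The relation at time `t` identifying the two targets of each relation strand
born by time `t`. -/
def Pres.rel {k l : ℕ} (P : Pres k l) (t : ℝ) :
    {i : Fin k // P.γ i ≤ t} → {i : Fin k // P.γ i ≤ t} → Prop :=
  fun a b => ∃ j : Fin l, P.ρ j ≤ t ∧
    ((P.f j = a.1 ∧ P.g j = b.1) ∨ (P.f j = b.1 ∧ P.g j = a.1))

/-- The persistent set presented by `P`: the pointwise coequalizer of the pair of maps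
`⊔ⱼ Rⱼ ⇉ ⊔ᵢ Gᵢ` of disjoint unions of strands. -/
def Pres.toPS {k l : ℕ} (P : Pres k l) : PersistentSet where
  obj t := Quot (P.rel t)
  map := fun {s t} h =>
    Quot.lift (fun a => Quot.mk (P.rel t) ⟨a.1, le_trans a.2 h⟩)
      (fun a b hab => Quot.sound (by
        obtain ⟨j, hj, hc⟩ := hab
        exact ⟨j, le_trans hj h, hc⟩))
  map_id := fun t x => Quot.inductionOn x fun a => rfl
  map_comp := fun h1 h2 x => Quot.inductionOn x fun a => rfl

/-- An isomorphism of persistent sets: a natural family of bijections. -/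
structure PSIso (M N : PersistentSet) where
  hom : ∀ t, M.obj t → N.obj t
  natural : ∀ {s t : ℝ} (h : s ≤ t) (x : M.obj s), hom t (M.map h x) = N.map h (hom s x)
  bij : ∀ t, Function.Bijective (hom t)

/-- `P` is a presentation of the persistent set `M`. -/
def IsPresentation {k l : ℕ} (P : Pres k l) (M : PersistentSet) : Prop :=
  Nonempty (PSIso P.toPS M)

/-- Two presentations are compatible if their underlying 0-1 presentation matrices agree:
entry `(i,j)` is 1 iff one of the two merge maps of relation `j` lands in generator `i`. -/
def Compatible {k l : ℕ} (P Q : Pres k l) : Prop :=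
  ∀ (i : Fin k) (j : Fin l), (P.f j = i ∨ P.g j = i) ↔ (Q.f j = i ∨ Q.g j = i)

/-- The `ℓp`-norm of a finite vector of reals, `p ∈ [1,∞]`. -/
noncomputable def lpNorm (p : ℝ≥0∞) {n : ℕ} (x : Fin n → ℝ) : ℝ :=
  if p = ⊤ then ⨆ i, |x i| else (∑ i, |x i| ^ p.toReal) ^ (1 / p.toReal)

/-- The difference of the label vectors of two compatible presentations: the vector of
differences of generator birth times followed by differences of relation birth times. -/
noncomputable def labelDiff {k l : ℕ} (P Q : Pres k l) : Fin (k + l) → ℝ :=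
  Fin.append (fun i => P.γ i - Q.γ i) (fun j => P.ρ j - Q.ρ j)

/-- The `p`-presentation semi-distance between merge trees. -/
noncomputable def dHat (p : ℝ≥0∞) (M N : MergeTree) : ℝ :=
  sInf {c | ∃ (k l : ℕ) (P Q : Pres k l), Compatible P Q ∧
    IsPresentation P M.toPS ∧ IsPresentation Q N.toPS ∧
    c = lpNorm p (labelDiff P Q)}

/-- The `p`-presentation distance: the path pseudometric induced by `dHat`. -/
noncomputable def dPres (p : ℝ≥0∞) (M N : MergeTree) : ℝ :=
  sInf {c | ∃ (n : ℕ) (Z : Fin (n + 1) → MergeTree), Z 0 = M ∧ Z (Fin.last n) = N ∧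
    c = ∑ i : Fin n, dHat p (Z i.castSucc) (Z i.succ)}


/-! ### Auxiliary machinery -/

section Aux

open Relation

variable {k l : ℕ}

/-- The symmetric pair relation of relation strand `j`. -/
def pairRel (f g : Fin l → Fin k) (j : Fin l) (a b : Fin k) : Prop :=
  (f j = a ∧ g j = b) ∨ (f j = b ∧ g j = a)

/-- The relation generated by the first `m` relation strands. -/
def baseRel (f g : Fin l → Fin k) (m : ℕ) (a b : Fin k) : Prop :=
  ∃ j : Fin l, (j : ℕ) < m ∧ pairRel f g j a b

/-- Equivalence generated by the first `m` relation strands. -/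
def eRel (f g : Fin l → Fin k) (m : ℕ) : Fin k → Fin k → Prop :=
  EqvGen (baseRel f g m)

variable {f g : Fin l → Fin k}

lemma eRel_mono {m m' : ℕ} (h : m ≤ m') {a b : Fin k} (hab : eRel f g m a b) :
    eRel f g m' a b :=
  EqvGen.mono (fun a b ⟨j, hj, hp⟩ => ⟨j, lt_of_lt_of_le hj h, hp⟩) _ _ hab

lemma eRel_pair {j : Fin l} {m : ℕ} (hj : (j : ℕ) < m) : eRel f g m (f j) (g j) :=
  EqvGen.rel _ _ ⟨j, hj, Or.inl ⟨rfl, rfl⟩⟩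

open Classical in
/-- The class of `a` under `eRel f g m`. -/
noncomputable def cls (f g : Fin l → Fin k) (m : ℕ) (a : Fin k) : Finset (Fin k) :=
  Finset.univ.filter (fun b => eRel f g m a b)

lemma mem_cls {m : ℕ} {a b : Fin k} : b ∈ cls f g m a ↔ eRel f g m a b := by
  classical simp [cls]

lemma cls_nonempty (m : ℕ) (a : Fin k) : (cls f g m a).Nonempty :=
  ⟨a, mem_cls.mpr (EqvGen.refl a)⟩

/-- Minimal representative of the class of `a`. -/
noncomputable def mu (f g : Fin l → Fin k) (m : ℕ) (a : Fin k) : Fin k :=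
  (cls f g m a).min' (cls_nonempty m a)

lemma mu_rel (m : ℕ) (a : Fin k) : eRel f g m a (mu f g m a) :=
  mem_cls.mp ((cls f g m a).min'_mem _)

lemma mu_le {m : ℕ} {a b : Fin k} (h : eRel f g m a b) : mu f g m a ≤ b :=
  Finset.min'_le _ _ (mem_cls.mpr h)

lemma mu_congr {m : ℕ} {a b : Fin k} (h : eRel f g m a b) : mu f g m a = mu f g m b :=
  le_antisymm (mu_le (EqvGen.trans _ _ _ h (mu_rel m b)))
    (mu_le (EqvGen.trans _ _ _ (EqvGen.symm _ _ h) (mu_rel m a)))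

lemma mu_idem (m : ℕ) (a : Fin k) : mu f g m (mu f g m a) = mu f g m a :=
  (mu_congr (mu_rel m a)).symm

lemma mu_mono {m m' : ℕ} (h : m ≤ m') (a : Fin k) : mu f g m' a ≤ mu f g m a :=
  Finset.min'_le _ _ (mem_cls.mpr (eRel_mono h (mu_rel m a)))

/-- Relation `j` is effective if it is not implied by the earlier relations. -/
def eff (f g : Fin l → Fin k) (j : Fin l) : Prop := ¬ eRel f g (j : ℕ) (f j) (g j)

/-- The representative killed by relation `j`. -/
noncomputable def KK (f g : Fin l → Fin k) (j : Fin l) : Fin k :=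
  max (mu f g (j : ℕ) (f j)) (mu f g (j : ℕ) (g j))

lemma mu_ne_of_eff {j : Fin l} (hj : eff f g j) :
    mu f g (j : ℕ) (f j) ≠ mu f g (j : ℕ) (g j) := by
  intro h
  exact hj (EqvGen.trans _ _ _ (mu_rel _ _)
    (EqvGen.trans _ _ _ (h ▸ EqvGen.refl _) (EqvGen.symm _ _ (mu_rel _ _))))

lemma mu_KK_fix (j : Fin l) : mu f g (j : ℕ) (KK f g j) = KK f g j := by
  rcases max_cases (mu f g (j : ℕ) (f j)) (mu f g (j : ℕ) (g j)) with ⟨h, -⟩ | ⟨h, -⟩ <;>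
    rw [KK, h, mu_idem]

lemma mu_succ_KK_lt {j : Fin l} (hj : eff f g j) :
    mu f g ((j : ℕ) + 1) (KK f g j) < KK f g j := by
  set a := mu f g (j : ℕ) (f j) with ha
  set b := mu f g (j : ℕ) (g j) with hb
  have hne : a ≠ b := mu_ne_of_eff hj
  have hab : eRel f g ((j : ℕ) + 1) a b :=
    EqvGen.trans _ _ _ (EqvGen.symm _ _ (eRel_mono (Nat.le_succ _) (mu_rel _ _)))
      (EqvGen.trans _ _ _ (eRel_pair (Nat.lt_succ_self _)) (eRel_mono (Nat.le_succ _) (mu_rel _ _)))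
  rcases le_total a b with h | h
  · have hK : KK f g j = b := max_eq_right h
    have : mu f g ((j : ℕ) + 1) b ≤ a := mu_le (EqvGen.symm _ _ hab)
    rw [hK]
    exact lt_of_le_of_lt this (lt_of_le_of_ne h hne)
  · have hK : KK f g j = a := max_eq_left h
    have : mu f g ((j : ℕ) + 1) a ≤ b := mu_le hab
    rw [hK]
    exact lt_of_le_of_lt this (lt_of_le_of_ne h (Ne.symm hne))

lemma KK_ne {j j' : Fin l} (hj : eff f g j) (hj' : eff f g j') (hlt : (j : ℕ) < (j' : ℕ)) :
    KK f g j ≠ KK f g j' := by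
  intro h
  have h1 : mu f g ((j : ℕ) + 1) (KK f g j) < KK f g j := mu_succ_KK_lt hj
  have h2 : mu f g (j' : ℕ) (KK f g j) ≤ mu f g ((j : ℕ) + 1) (KK f g j) := mu_mono hlt _
  have h3 : mu f g (j' : ℕ) (KK f g j') = KK f g j' := mu_KK_fix j'
  have h5 : mu f g (j' : ℕ) (KK f g j) = KK f g j := by rw [h]; exact h3
  have h6 := lt_of_le_of_lt h2 h1
  rw [h5] at h6
  exact lt_irrefl _ h6

lemma KK_ne_zero [NeZero k] {j : Fin l} (hj : eff f g j) : KK f g j ≠ 0 := by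
  have h := min_lt_max.mpr (mu_ne_of_eff hj)
  have h0 : (0 : Fin k) ≤ min (mu f g (j : ℕ) (f j)) (mu f g (j : ℕ) (g j)) := by
    rcases k with _ | k
    · exact absurd rfl (NeZero.ne 0)
    · exact Fin.zero_le _
  exact fun hc => absurd (lt_of_le_of_lt h0 h) (by rw [KK] at hc; rw [hc]; exact lt_irrefl _)

open Classical in
lemma card_eff [NeZero k] :
    (Finset.univ.filter (fun j => eff f g j)).card ≤ k - 1 := by
  have hmaps : ∀ j ∈ Finset.univ.filter (fun j => eff f g j),
      KK f g j ∈ (Finset.univ : Finset (Fin k)).erase 0 := by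
    intro j hj
    rw [Finset.mem_filter] at hj
    exact Finset.mem_erase.mpr ⟨KK_ne_zero hj.2, Finset.mem_univ _⟩
  have hinj : Set.InjOn (KK f g) (Finset.univ.filter (fun j => eff f g j) : Finset (Fin l)) := by
    intro j hj j' hj' h
    rw [Finset.coe_filter, Set.mem_setOf_eq] at hj hj'
    by_contra hne
    rcases lt_trichotomy (j : ℕ) (j' : ℕ) with hlt | heq | hlt
    · exact KK_ne hj.2 hj'.2 hlt h
    · exact hne (Fin.ext heq)
    · exact KK_ne hj'.2 hj.2 hlt h.symm
  have := Finset.card_le_card_of_injOn (KK f g) hmaps hinj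
  rwa [Finset.card_erase_of_mem (Finset.mem_univ _), Finset.card_univ, Fintype.card_fin] at this

end Aux

section Aux2

open Relation

/-- Elements related by the first `m` relations are equal or both born by `t`. -/
lemma eRel_born {k l : ℕ} {γ : Fin k → ℝ} {ρ : Fin l → ℝ} {f g : Fin l → Fin k}
    (hf : ∀ j, γ (f j) ≤ ρ j) (hg : ∀ j, γ (g j) ≤ ρ j) {t : ℝ} {m : ℕ}
    (hm : ∀ j : Fin l, (j : ℕ) < m → ρ j ≤ t) {x y : Fin k} (h : eRel f g m x y) :
    x = y ∨ (γ x ≤ t ∧ γ y ≤ t) := by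
  induction h with
  | rel x y hb =>
    obtain ⟨j, hj, hp⟩ := hb
    have hρ : ρ j ≤ t := hm j hj
    rcases hp with ⟨h1, h2⟩ | ⟨h1, h2⟩
    · exact Or.inr ⟨h1 ▸ (hf j).trans hρ, h2 ▸ (hg j).trans hρ⟩
    · exact Or.inr ⟨h2 ▸ (hg j).trans hρ, h1 ▸ (hf j).trans hρ⟩
  | refl x => exact Or.inl rfl
  | symm x y h ih => exact ih.imp Eq.symm And.symm
  | trans x y z h1 h2 ih1 ih2 =>
    rcases ih1 with rfl | ⟨hx, hy⟩
    · exact ih2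
    · rcases ih2 with rfl | ⟨hy2, hz⟩
      · exact Or.inr ⟨hx, hy⟩
      · exact Or.inr ⟨hx, hz⟩

/-- Key lemma: every relation born by time `t` is derivable (as an `EqvGen` chain)
from the effective relations born by time `t`. -/
lemma key_lemma {k l : ℕ} (γ : Fin k → ℝ) (ρ : Fin l → ℝ) (f g : Fin l → Fin k)
    (hf : ∀ j, γ (f j) ≤ ρ j) (hg : ∀ j, γ (g j) ≤ ρ j) (hmono : Monotone ρ)
    (t : ℝ) (r : {i : Fin k // γ i ≤ t} → {i : Fin k // γ i ≤ t} → Prop)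
    (hr : ∀ j : Fin l, eff f g j → ∀ hjt : ρ j ≤ t,
        EqvGen r ⟨f j, (hf j).trans hjt⟩ ⟨g j, (hg j).trans hjt⟩) :
    ∀ j : Fin l, ∀ hjt : ρ j ≤ t,
      EqvGen r ⟨f j, (hf j).trans hjt⟩ ⟨g j, (hg j).trans hjt⟩ := by
  suffices H : ∀ N : ℕ, ∀ j : Fin l, (j : ℕ) < N → ∀ hjt : ρ j ≤ t,
      EqvGen r ⟨f j, (hf j).trans hjt⟩ ⟨g j, (hg j).trans hjt⟩ by
    exact fun j hjt => H ((j : ℕ) + 1) j (Nat.lt_succ_self _) hjt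
  intro N
  induction N with
  | zero => exact fun j hj => absurd hj (Nat.not_lt_zero _)
  | succ N IH =>
    intro j hj hjt
    by_cases hcase : eff f g j
    · exact hr j hcase hjt
    · have hcase' : eRel f g (j : ℕ) (f j) (g j) := not_not.mp hcase
      have hm : ∀ j' : Fin l, (j' : ℕ) < (j : ℕ) → ρ j' ≤ t := by
        intro j' hj'
        exact (hmono (le_of_lt (show j' < j from hj'))).trans hjt
      have inner : ∀ x y : Fin k, eRel f g (j : ℕ) x y →
          ∀ (hx : γ x ≤ t) (hy : γ y ≤ t), EqvGen r ⟨x, hx⟩ ⟨y, hy⟩ := by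
        intro x y hxy
        induction hxy with
        | rel x y hb =>
          intro hx hy
          obtain ⟨j', hj', hp⟩ := hb
          have hj't : ρ j' ≤ t := hm j' hj'
          have hN : (j' : ℕ) < N := lt_of_lt_of_le hj' (Nat.lt_succ_iff.mp hj)
          have h0 := IH j' hN hj't
          rcases hp with ⟨h1, h2⟩ | ⟨h1, h2⟩
          · subst h1; subst h2; exact h0
          · subst h1; subst h2; exact EqvGen.symm _ _ h0
        | refl x => intro hx hy; exact EqvGen.refl _
        | symm x y h ih => intro hx hy; exact EqvGen.symm _ _ (ih hy hx)
        | trans x y z h1 h2 ih1 ih2 =>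
          intro hx hz
          rcases eRel_born hf hg hm h1 with rfl | ⟨-, hy⟩
          · exact ih2 hx hz
          · exact EqvGen.trans _ _ _ (ih1 hx hy) (ih2 hy hz)
      exact inner _ _ hcase' _ _

/-- Isomorphism of presented persistent sets from mutual `EqvGen`-implication of
the relations (with the same generators). -/
theorem presIso_of_rel {k l₁ l₂ : ℕ} (γ : Fin k → ℝ)
    (ρ₁ : Fin l₁ → ℝ) (f₁ g₁ : Fin l₁ → Fin k) (hf₁ : ∀ j, γ (f₁ j) ≤ ρ₁ j)
    (hg₁ : ∀ j, γ (g₁ j) ≤ ρ₁ j)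
    (ρ₂ : Fin l₂ → ℝ) (f₂ g₂ : Fin l₂ → Fin k) (hf₂ : ∀ j, γ (f₂ j) ≤ ρ₂ j)
    (hg₂ : ∀ j, γ (g₂ j) ≤ ρ₂ j)
    (h12 : ∀ (t : ℝ) (a b : {i : Fin k // γ i ≤ t}),
      (Pres.mk γ ρ₁ f₁ g₁ hf₁ hg₁).rel t a b →
        EqvGen ((Pres.mk γ ρ₂ f₂ g₂ hf₂ hg₂).rel t) a b)
    (h21 : ∀ (t : ℝ) (a b : {i : Fin k // γ i ≤ t}),
      (Pres.mk γ ρ₂ f₂ g₂ hf₂ hg₂).rel t a b →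
        EqvGen ((Pres.mk γ ρ₁ f₁ g₁ hf₁ hg₁).rel t) a b) :
    Nonempty (PSIso (Pres.mk γ ρ₁ f₁ g₁ hf₁ hg₁).toPS (Pres.mk γ ρ₂ f₂ g₂ hf₂ hg₂).toPS) := by
  refine ⟨⟨fun t => Quot.lift (fun a => Quot.mk ((Pres.mk γ ρ₂ f₂ g₂ hf₂ hg₂).rel t) a)
    (fun a b hab => Quot.eqvGen_sound (h12 t a b hab)), ?_, ?_⟩⟩
  · intro s t h x
    exact Quot.inductionOn x (fun a => rfl)
  · intro t
    refine Function.bijective_iff_has_inverse.mpr ?_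
    refine ⟨Quot.lift (fun a => Quot.mk ((Pres.mk γ ρ₁ f₁ g₁ hf₁ hg₁).rel t) a)
      (fun a b hab => Quot.eqvGen_sound (h21 t a b hab)), ?_, ?_⟩
    · exact fun x => Quot.inductionOn x (fun a => rfl)
    · exact fun x => Quot.inductionOn x (fun a => rfl)

theorem psIso_trans {A B C : PersistentSet} (h1 : Nonempty (PSIso A B))
    (h2 : Nonempty (PSIso B C)) : Nonempty (PSIso A C) := by
  obtain ⟨i1⟩ := h1
  obtain ⟨i2⟩ := h2
  exact ⟨⟨fun t x => i2.hom t (i1.hom t x),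
    fun h x => by beta_reduce; rw [i1.natural h x, i2.natural h (i1.hom _ x)],
    fun t => (i2.bij t).comp (i1.bij t)⟩⟩

end Aux2

/-- every merge tree with `n ≥ 1` leaf nodes (i.e. whose minimal number of
generators over all presentations is `n`) admits a presentation with `n` generators and
`n - 1` relations. -/
theorem presentation_with_n_minus_one_relations (M : MergeTree) (n : ℕ) (hn : 1 ≤ n)
    (hleaves : IsLeast {k : ℕ | ∃ l : ℕ, ∃ P : Pres k l, IsPresentation P M.toPS} n) :
    ∃ P : Pres n (n - 1), IsPresentation P M.toPS := by
  classical
  haveI : NeZero n := ⟨by omega⟩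
  obtain ⟨⟨l, P0, hP0⟩, -⟩ := hleaves
  obtain ⟨γ, ρ0, f0, g0, hf0, hg0⟩ := P0
  set σ := Tuple.sort ρ0 with hσ
  set ρ : Fin l → ℝ := fun j => ρ0 (σ j) with hρdef
  set f : Fin l → Fin n := fun j => f0 (σ j) with hfdef
  set g : Fin l → Fin n := fun j => g0 (σ j) with hgdef
  have hf : ∀ j, γ (f j) ≤ ρ j := fun j => hf0 (σ j)
  have hg : ∀ j, γ (g j) ≤ ρ j := fun j => hg0 (σ j)
  have hmono : Monotone ρ := Tuple.monotone_sort ρ0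
  have hsort : Nonempty (PSIso (Pres.mk γ ρ f g hf hg).toPS
      (Pres.mk γ ρ0 f0 g0 hf0 hg0).toPS) := by
    apply presIso_of_rel
    · rintro t a b ⟨j, hjt, hp⟩
      exact Relation.EqvGen.rel _ _ ⟨σ j, hjt, hp⟩
    · rintro t a b ⟨j, hjt, hp⟩
      refine Relation.EqvGen.rel _ _ ⟨σ.symm j, ?_, ?_⟩
      · show ρ (σ.symm j) ≤ t
        rw [hρdef]
        simpa using hjt
      · show (f (σ.symm j) = a.1 ∧ g (σ.symm j) = b.1) ∨
          (f (σ.symm j) = b.1 ∧ g (σ.symm j) = a.1)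
        simp only [hfdef, hgdef, Equiv.apply_symm_apply]
        exact hp
  set S : Finset (Fin l) := Finset.univ.filter (fun j => eff f g j) with hS
  have hcard : S.card ≤ n - 1 := card_eff
  set em := S.orderEmbOfFin rfl with hem
  set ρQ : Fin (n - 1) → ℝ :=
    fun i => if h : (i : ℕ) < S.card then ρ (em ⟨i, h⟩) else γ 0 with hρQ
  set fQ : Fin (n - 1) → Fin n :=
    fun i => if h : (i : ℕ) < S.card then f (em ⟨i, h⟩) else 0 with hfQ
  set gQ : Fin (n - 1) → Fin n :=
    fun i => if h : (i : ℕ) < S.card then g (em ⟨i, h⟩) else 0 with hgQ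
  have hfQ' : ∀ i, γ (fQ i) ≤ ρQ i := by
    intro i
    simp only [hρQ, hfQ]
    split_ifs with h
    · exact hf _
    · exact le_refl _
  have hgQ' : ∀ i, γ (gQ i) ≤ ρQ i := by
    intro i
    simp only [hρQ, hgQ]
    split_ifs with h
    · exact hg _
    · exact le_refl _
  refine ⟨⟨γ, ρQ, fQ, gQ, hfQ', hgQ'⟩, ?_⟩
  refine psIso_trans (psIso_trans ?_ hsort) hP0
  apply presIso_of_rel
  · -- Q.rel implies EqvGen of sorted rel
    rintro t a b ⟨i, hit, hp⟩
    by_cases h : (i : ℕ) < S.card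
    · simp only [hρQ, dif_pos h] at hit
      simp only [hfQ, hgQ, dif_pos h] at hp
      exact Relation.EqvGen.rel _ _ ⟨em ⟨i, h⟩, hit, hp⟩
    · simp only [hfQ, hgQ, dif_neg h] at hp
      have hab : a = b := Subtype.ext (by rcases hp with ⟨h1, h2⟩ | ⟨h1, h2⟩ <;>
        rw [← h1, ← h2])
      rw [hab]
      exact Relation.EqvGen.refl _
  · -- sorted rel implies EqvGen of Q.rel
    rintro t a b ⟨j, hjt, hp⟩
    have hr : ∀ j : Fin l, eff f g j → ∀ hjt : ρ j ≤ t,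
        Relation.EqvGen ((Pres.mk γ ρQ fQ gQ hfQ' hgQ').rel t)
          ⟨f j, (hf j).trans hjt⟩ ⟨g j, (hg j).trans hjt⟩ := by
      intro j hj hjt
      have hjS : j ∈ S := by
        rw [hS]
        exact Finset.mem_filter.mpr ⟨Finset.mem_univ _, hj⟩
      have hex : ∃ i : Fin S.card, em i = j := by
        have hrange := Finset.range_orderEmbOfFin S (rfl : S.card = S.card)
        have : j ∈ Set.range (em : Fin S.card → Fin l) := by
          rw [hem, hrange]
          exact hjS
        exact this
      obtain ⟨i, hi⟩ := hex
      have hilt : (i : ℕ) < n - 1 := lt_of_lt_of_le i.2 hcard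
      refine Relation.EqvGen.rel _ _ ⟨⟨(i : ℕ), hilt⟩, ?_, Or.inl ⟨?_, ?_⟩⟩
      · show ρQ _ ≤ t
        simp only [hρQ, dif_pos i.2]
        rw [Fin.eta, hi]
        exact hjt
      · show fQ _ = _
        simp only [hfQ, dif_pos i.2]
        rw [Fin.eta, hi]
      · show gQ _ = _
        simp only [hgQ, dif_pos i.2]
        rw [Fin.eta, hi]
    have h0 := key_lemma γ ρ f g hf hg hmono t _ hr j hjt
    obtain ⟨a, ha⟩ := a
    obtain ⟨b, hb⟩ := b
    rcases hp with ⟨h1, h2⟩ | ⟨h1, h2⟩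
    · subst h1; subst h2; exact h0
    · subst h1; subst h2; exact Relation.EqvGen.symm _ _ h0
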